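/- Let n be a positive integer, 1 ≤ p* ≤ 2 ≤ q ≤ ∞, and let A = diag(a_{11}, …, a_{nn}) be a real diagonal n×n matrix. Let G = (a_{ij} g_{ij}) where the g_{ij} are independent standard Gaussian random variables. Then E‖G : ℓ_{p*}^n → ℓ_q^n‖ = E max_{i≤n} |a_{ii} g_{ii}|, and consequently there exist absolute constants c, C > 0 with c · max_{i≤n} √(log(i+3)) · a_{ii}^* ≤ E‖G : ℓ_{p*}^n → ℓ_q^n‖ ≤ C · max_{i≤n} √(log(i+3)) · a_{ii}^*, where (a_{ii}^*)_{i≤n} is the decreasing rearrangement of (|a_{ii}|)_{i≤n}. -/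

import Mathlib

open MeasureTheory ProbabilityTheory Real
open scoped ENNReal

/-- The ℓ_p norm of a vector in ℝ^n, for an exponent `p ∈ [1,∞]`. -/
noncomputable def pnormE (p : ℝ≥0∞) {n : ℕ} (x : Fin n → ℝ) : ℝ :=
  if p = ∞ then ⨆ j, |x j| else (∑ j, |x j| ^ p.toReal) ^ (1 / p.toReal)

/-- The operator norm of an m×n matrix acting from ℓ_{p*}^n to ℓ_q^m,
for exponents in `[1,∞]`. -/
noncomputable def opNormE (pstar q : ℝ≥0∞) {m n : ℕ} (M : Matrix (Fin m) (Fin n) ℝ) : ℝ :=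
  ⨆ y : {y : Fin n → ℝ // pnormE pstar y ≤ 1}, pnormE q (fun i => ∑ j, M i j * y.1 j)

lemma pnormE_nonneg (p : ℝ≥0∞) {n : ℕ} (x : Fin n → ℝ) : 0 ≤ pnormE p x := by
  unfold pnormE
  split
  · exact Real.iSup_nonneg fun j => abs_nonneg _
  · exact Real.rpow_nonneg (Finset.sum_nonneg fun j _ => Real.rpow_nonneg (abs_nonneg _) _) _

lemma one_le_toReal {p : ℝ≥0∞} (hp : 1 ≤ p) (hp' : p ≠ ∞) : 1 ≤ p.toReal := by
  simpa using ENNReal.toReal_mono hp' hp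

lemma pnormE_zero {n : ℕ} {p : ℝ≥0∞} (hp : 1 ≤ p) (hp' : p ≠ ∞) :
    pnormE p (0 : Fin n → ℝ) = 0 := by
  have h1 : 1 ≤ p.toReal := one_le_toReal hp hp'
  have h0 : p.toReal ≠ 0 := by positivity
  simp only [pnormE, if_neg hp', Pi.zero_apply, abs_zero, Real.zero_rpow h0,
    Finset.sum_const_zero]
  rw [Real.zero_rpow (by positivity)]

lemma myRpowInv {v r : ℝ} (hv : 0 ≤ v) (hr : r ≠ 0) : (v ^ r) ^ (1 / r) = v := by
  rw [← Real.rpow_mul hv, mul_one_div_cancel hr, Real.rpow_one]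

lemma abs_le_pnormE {n : ℕ} {p : ℝ≥0∞} (hp : 1 ≤ p) (x : Fin n → ℝ) (j : Fin n) :
    |x j| ≤ pnormE p x := by
  by_cases h : p = ∞
  · rw [pnormE, if_pos h]
    exact le_ciSup (Set.Finite.bddAbove (Set.finite_range fun i => |x i|)) j
  · rw [pnormE, if_neg h]
    have h1 : 1 ≤ p.toReal := one_le_toReal hp h
    have h0 : 0 < p.toReal := by linarith
    have hle : |x j| ^ p.toReal ≤ ∑ i, |x i| ^ p.toReal :=
      Finset.single_le_sum (fun i _ => Real.rpow_nonneg (abs_nonneg _) _) (Finset.mem_univ j)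
    calc |x j| = (|x j| ^ p.toReal) ^ (1 / p.toReal) := (myRpowInv (abs_nonneg _) h0.ne').symm
      _ ≤ (∑ i, |x i| ^ p.toReal) ^ (1 / p.toReal) :=
          Real.rpow_le_rpow (Real.rpow_nonneg (abs_nonneg _) _) hle (by positivity)

lemma sum_rpow_le {n : ℕ} (x : Fin n → ℝ) {pr qr : ℝ} (hpr : 0 < pr) (hpq : pr ≤ qr) :
    (∑ j, |x j| ^ qr) ^ (1 / qr) ≤ (∑ j, |x j| ^ pr) ^ (1 / pr) := by
  have hqr : 0 < qr := lt_of_lt_of_le hpr hpq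
  set S := ∑ j, |x j| ^ pr with hS
  have hS0 : 0 ≤ S := Finset.sum_nonneg fun j _ => Real.rpow_nonneg (abs_nonneg _) _
  have hxj : ∀ j, |x j| ≤ S ^ (1 / pr) := by
    intro j
    calc |x j| = (|x j| ^ pr) ^ (1 / pr) := (myRpowInv (abs_nonneg _) hpr.ne').symm
      _ ≤ S ^ (1 / pr) := Real.rpow_le_rpow (Real.rpow_nonneg (abs_nonneg _) _)
          (Finset.single_le_sum (fun i _ => Real.rpow_nonneg (abs_nonneg _) _)
            (Finset.mem_univ j)) (by positivity)
  have key : ∑ j, |x j| ^ qr ≤ S ^ (qr / pr) := by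
    rcases eq_or_lt_of_le hS0 with h0 | hSpos
    · -- S = 0, all coordinates zero
      have hz : ∀ j : Fin n, |x j| = 0 := by
        intro j
        have := hxj j
        rw [← h0, Real.zero_rpow (by positivity : (1:ℝ)/pr ≠ 0)] at this
        exact le_antisymm this (abs_nonneg _)
      rw [← h0, Real.zero_rpow (by positivity : qr/pr ≠ 0)]
      apply le_of_eq
      apply Finset.sum_eq_zero
      intro j _
      rw [hz j, Real.zero_rpow hqr.ne']
    · have step : ∀ j : Fin n, |x j| ^ qr ≤ |x j| ^ pr * S ^ ((qr - pr) / pr) := by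
        intro j
        have hsplit : |x j| ^ qr = |x j| ^ pr * |x j| ^ (qr - pr) := by
          rw [← Real.rpow_add' (abs_nonneg _) (by rw [add_sub_cancel]; exact hqr.ne'),
            add_sub_cancel]
        rw [hsplit]
        apply mul_le_mul_of_nonneg_left _ (Real.rpow_nonneg (abs_nonneg _) _)
        calc |x j| ^ (qr - pr) ≤ (S ^ (1 / pr)) ^ (qr - pr) :=
              Real.rpow_le_rpow (abs_nonneg _) (hxj j) (by linarith)
          _ = S ^ ((qr - pr) / pr) := by
              rw [← Real.rpow_mul hS0]; ring_nf
      calc ∑ j, |x j| ^ qr ≤ ∑ j, |x j| ^ pr * S ^ ((qr - pr) / pr) :=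
            Finset.sum_le_sum fun j _ => step j
        _ = S * S ^ ((qr - pr) / pr) := by rw [← Finset.sum_mul]
        _ = S ^ (qr / pr) := by
            nth_rewrite 1 [← Real.rpow_one S]
            rw [← Real.rpow_add hSpos]
            congr 1
            field_simp
            ring
  calc (∑ j, |x j| ^ qr) ^ (1 / qr) ≤ (S ^ (qr / pr)) ^ (1 / qr) :=
        Real.rpow_le_rpow (Finset.sum_nonneg fun j _ => Real.rpow_nonneg (abs_nonneg _) _)
          key (by positivity)
    _ = S ^ (1 / pr) := by
        rw [← Real.rpow_mul hS0]
        congr 1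
        field_simp

lemma pnormE_antitone {n : ℕ} (hn : 0 < n) (x : Fin n → ℝ) {p q : ℝ≥0∞}
    (hp : 1 ≤ p) (hpq : p ≤ q) : pnormE q x ≤ pnormE p x := by
  haveI : Nonempty (Fin n) := Fin.pos_iff_nonempty.mp hn
  by_cases hq : q = ∞
  · by_cases hp' : p = ∞
    · rw [hq, hp']
    · rw [pnormE, if_pos hq]
      exact ciSup_le fun j => abs_le_pnormE hp x j
  · have hp' : p ≠ ∞ := fun h => hq (top_le_iff.mp (h ▸ hpq))
    rw [pnormE, if_neg hq, pnormE, if_neg hp']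
    have h1 : 1 ≤ p.toReal := one_le_toReal hp hp'
    exact sum_rpow_le x (by linarith) (ENNReal.toReal_mono hq hpq)

lemma pnormE_mul_le {n : ℕ} (hn : 0 < n) {q : ℝ≥0∞} (hq : 1 ≤ q) (d y : Fin n → ℝ)
    {M : ℝ} (hM : 0 ≤ M) (hd : ∀ i, |d i| ≤ M) :
    pnormE q (fun i => d i * y i) ≤ M * pnormE q y := by
  haveI : Nonempty (Fin n) := Fin.pos_iff_nonempty.mp hn
  by_cases h : q = ∞
  · rw [pnormE, if_pos h, pnormE, if_pos h]
    apply ciSup_le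
    intro i
    rw [abs_mul]
    exact mul_le_mul (hd i) (le_ciSup (Set.Finite.bddAbove (Set.finite_range fun i => |y i|)) i)
      (abs_nonneg _) hM
  · rw [pnormE, if_neg h, pnormE, if_neg h]
    have h1 : 1 ≤ q.toReal := one_le_toReal hq h
    have h0 : 0 < q.toReal := by linarith
    calc (∑ j, |d j * y j| ^ q.toReal) ^ (1 / q.toReal)
        ≤ (∑ j, M ^ q.toReal * |y j| ^ q.toReal) ^ (1 / q.toReal) := by
          apply Real.rpow_le_rpow (Finset.sum_nonneg fun j _ => Real.rpow_nonneg (abs_nonneg _) _)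
            (Finset.sum_le_sum fun j _ => ?_) (by positivity)
          rw [← Real.mul_rpow hM (abs_nonneg _), abs_mul]
          exact Real.rpow_le_rpow (mul_nonneg (abs_nonneg _) (abs_nonneg _))
            (mul_le_mul_of_nonneg_right (hd j) (abs_nonneg _)) (by positivity)
      _ = M * (∑ j, |y j| ^ q.toReal) ^ (1 / q.toReal) := by
          rw [← Finset.mul_sum, Real.mul_rpow (by positivity)
            (Finset.sum_nonneg fun j _ => Real.rpow_nonneg (abs_nonneg _) _),
            myRpowInv hM h0.ne']

lemma pnormE_ite_single {n : ℕ} {q : ℝ≥0∞} (hq : 1 ≤ q) (i0 : Fin n) (v : ℝ) :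
    pnormE q (fun i => if i = i0 then v else 0) = |v| := by
  haveI : Nonempty (Fin n) := ⟨i0⟩
  by_cases h : q = ∞
  · rw [pnormE, if_pos h]
    apply le_antisymm
    · apply ciSup_le
      intro i
      by_cases hi : i = i0 <;> simp [hi, abs_nonneg]
    · have := le_ciSup (Set.Finite.bddAbove
        (Set.finite_range fun i => |if i = i0 then v else 0|)) i0
      simpa using this
  · rw [pnormE, if_neg h]
    have h1 : 1 ≤ q.toReal := one_le_toReal hq h
    have h0 : 0 < q.toReal := by linarith
    have : ∀ i : Fin n, |if i = i0 then v else 0| ^ q.toReal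
        = if i = i0 then |v| ^ q.toReal else 0 := by
      intro i
      by_cases hi : i = i0 <;> simp [hi, Real.zero_rpow h0.ne']
    simp_rw [this]
    rw [Finset.sum_ite_eq' Finset.univ i0 fun _ => |v| ^ q.toReal, if_pos (Finset.mem_univ i0),
      myRpowInv (abs_nonneg v) h0.ne']

lemma opNormE_diag {n : ℕ} (hn : 0 < n) {pstar q : ℝ≥0∞}
    (h1 : 1 ≤ pstar) (h2 : pstar ≤ 2) (h3 : 2 ≤ q) (d : Fin n → ℝ) :
    opNormE pstar q (Matrix.of fun i j => if i = j then d i else 0) = ⨆ i, |d i| := by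
  haveI : Nonempty (Fin n) := Fin.pos_iff_nonempty.mp hn
  have hps' : pstar ≠ ∞ := fun h => by rw [h] at h2; exact (by norm_num : ¬ (∞ : ℝ≥0∞) ≤ 2) h2
  have hq1 : 1 ≤ q := le_trans (by norm_num) h3
  have hpq : pstar ≤ q := le_trans h2 h3
  set M := ⨆ i, |d i| with hMdef
  have hM0 : 0 ≤ M := Real.iSup_nonneg fun i => abs_nonneg _
  have hd : ∀ i, |d i| ≤ M := fun i =>
    le_ciSup (Set.Finite.bddAbove (Set.finite_range fun i => |d i|)) i
  have hcollapse : ∀ (y : Fin n → ℝ) (i : Fin n),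
      (∑ j, (Matrix.of fun i j => if i = j then d i else 0) i j * y j) = d i * y i := by
    intro y i
    rw [Finset.sum_eq_single i]
    · simp
    · intro j _ hj
      simp [Matrix.of_apply, Ne.symm hj]
    · simp
  have hbound : ∀ y : {y : Fin n → ℝ // pnormE pstar y ≤ 1},
      pnormE q (fun i => ∑ j, (Matrix.of fun i j => if i = j then d i else 0) i j * y.1 j) ≤ M := by
    rintro ⟨y, hy⟩
    simp only [hcollapse y]
    calc pnormE q (fun i => d i * y i) ≤ M * pnormE q y := pnormE_mul_le hn hq1 d y hM0 hd
      _ ≤ M * pnormE pstar y := mul_le_mul_of_nonneg_left (pnormE_antitone hn y h1 hpq) hM0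
      _ ≤ M * 1 := mul_le_mul_of_nonneg_left hy hM0
      _ = M := mul_one M
  haveI : Nonempty {y : Fin n → ℝ // pnormE pstar y ≤ 1} :=
    ⟨⟨0, by rw [pnormE_zero h1 hps']; norm_num⟩⟩
  apply le_antisymm
  · exact ciSup_le hbound
  · apply ciSup_le
    intro i0
    have he : pnormE pstar (fun j : Fin n => if j = i0 then (1:ℝ) else 0) ≤ 1 := by
      rw [pnormE_ite_single h1 i0 1]; norm_num
    refine le_ciSup_of_le ⟨M, ?_⟩ ⟨_, he⟩ ?_
    · rintro _ ⟨y, rfl⟩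
      exact hbound y
    · have hfun : (fun i => ∑ j, (Matrix.of fun i j => if i = j then d i else 0) i j *
          (if j = i0 then (1:ℝ) else 0)) = fun i => if i = i0 then d i else 0 := by
        funext i
        rw [Finset.sum_eq_single i0]
        · by_cases hi : i = i0 <;> simp [Matrix.of_apply, hi]
        · intro j _ hj
          simp [hj]
        · simp
      rw [hfun]
      have h2fun : (fun i : Fin n => if i = i0 then d i else 0)
          = fun i : Fin n => if i = i0 then d i0 else 0 := by
        funext i
        by_cases hi : i = i0 <;> simp [hi]
      rw [h2fun]
      exact le_of_eq (pnormE_ite_single hq1 i0 (d i0)).symm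

lemma gauss_shift (s : ℝ) : (fun x => gaussianPDFReal 0 1 x * Real.exp (s*x))
    = fun x => Real.exp (s^2/2) * gaussianPDFReal s 1 x := by
  funext x
  simp only [gaussianPDFReal, NNReal.coe_one, mul_one, sub_zero]
  rw [mul_assoc, ← Real.exp_add,
    show rexp (s^2/2) * ((√(2*π))⁻¹ * rexp (-(x-s)^2/2)) = (√(2*π))⁻¹ * rexp (s^2/2 + -(x-s)^2/2) by
      rw [Real.exp_add]; ring]
  congr 1
  ring

lemma gaussianReal_eq_withDensity :
    gaussianReal 0 1 = volume.withDensity (fun x => (Real.toNNReal (gaussianPDFReal 0 1 x) : ℝ≥0∞)) := by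
  rw [gaussianReal_of_var_ne_zero 0 one_ne_zero]
  rfl

lemma integrable_exp_gaussian (s : ℝ) :
    Integrable (fun x => Real.exp (s*x)) (gaussianReal 0 1) := by
  rw [gaussianReal_eq_withDensity]
  rw [integrable_withDensity_iff_integrable_smul
    ((measurable_gaussianPDFReal 0 1).real_toNNReal)]
  have : (fun x => (Real.toNNReal (gaussianPDFReal 0 1 x)) • Real.exp (s*x))
      = fun x => Real.exp (s^2/2) * gaussianPDFReal s 1 x := by
    rw [← gauss_shift s]
    funext x
    rw [NNReal.smul_def, smul_eq_mul, Real.coe_toNNReal _ (gaussianPDFReal_nonneg 0 1 x)]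
  rw [this]
  exact (integrable_gaussianPDFReal s 1).const_mul _

lemma integral_exp_gaussian (s : ℝ) :
    ∫ x, Real.exp (s*x) ∂(gaussianReal 0 1) = Real.exp (s^2/2) := by
  rw [gaussianReal_eq_withDensity,
    integral_withDensity_eq_integral_smul ((measurable_gaussianPDFReal 0 1).real_toNNReal)]
  have : (fun x => (Real.toNNReal (gaussianPDFReal 0 1 x)) • Real.exp (s*x))
      = fun x => Real.exp (s^2/2) * gaussianPDFReal s 1 x := by
    rw [← gauss_shift s]
    funext x
    rw [NNReal.smul_def, smul_eq_mul, Real.coe_toNNReal _ (gaussianPDFReal_nonneg 0 1 x)]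
  rw [this, integral_const_mul, integral_gaussianPDFReal_eq_one s one_ne_zero, mul_one]

lemma sqrt_two_pi_le : Real.sqrt (2*π) ≤ 2.51 := by
  rw [show (2.51:ℝ) = Real.sqrt (2.51^2) from (Real.sqrt_sq (by norm_num)).symm]
  apply Real.sqrt_le_sqrt
  nlinarith [Real.pi_lt_d2]

lemma gauss_pdf_lb {t : ℝ} (ht : 0 ≤ t) :
    (1/8) * Real.exp (-t^2) ≤ gaussianPDFReal 0 1 (t+1) := by
  have h1 : gaussianPDFReal 0 1 (t+1) = (Real.sqrt (2*π))⁻¹ * Real.exp (-(t+1)^2/2) := by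
    simp [gaussianPDFReal]
  rw [h1]
  have hexp1 : Real.exp (-(t+1)^2/2) ≥ Real.exp (-1) * Real.exp (-t^2) := by
    rw [← Real.exp_add]
    apply Real.exp_le_exp.mpr
    nlinarith [sq_nonneg (t-1)]
  have hs : (0:ℝ) < Real.sqrt (2*π) := Real.sqrt_pos.mpr (by positivity)
  have hinv : (Real.sqrt (2*π))⁻¹ ≥ 1/2.51 := by
    rw [ge_iff_le, ← one_div]
    exact one_div_le_one_div_of_le hs sqrt_two_pi_le
  have he : Real.exp (-1) ≥ 1/2.72 := by
    rw [Real.exp_neg, ge_iff_le, ← one_div]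
    exact one_div_le_one_div_of_le (Real.exp_pos 1)
      (le_of_lt (lt_trans Real.exp_one_lt_d9 (by norm_num)))
  have hepos := Real.exp_pos (-t^2)
  calc (1/8) * Real.exp (-t^2) ≤ (1/2.51) * ((1/2.72) * Real.exp (-t^2)) := by nlinarith
    _ ≤ (Real.sqrt (2*π))⁻¹ * (Real.exp (-1) * Real.exp (-t^2)) := by
        apply mul_le_mul hinv _ (by positivity) (by positivity)
        nlinarith
    _ ≤ (Real.sqrt (2*π))⁻¹ * Real.exp (-(t+1)^2/2) := by
        apply mul_le_mul_of_nonneg_left _ (by positivity)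
        exact hexp1

lemma gauss_tail {t : ℝ} (ht : 0 ≤ t) :
    (1/8) * Real.exp (-t^2) ≤ (gaussianReal 0 1 (Set.Ioc t (t+1))).toReal := by
  rw [gaussianReal_apply_eq_integral 0 one_ne_zero,
    ENNReal.toReal_ofReal (setIntegral_nonneg measurableSet_Ioc
      (fun x _ => gaussianPDFReal_nonneg 0 1 x))]
  have hpt : ∀ x ∈ Set.Ioc t (t+1), gaussianPDFReal 0 1 (t+1) ≤ gaussianPDFReal 0 1 x := by
    intro x hx
    simp only [gaussianPDFReal, NNReal.coe_one, mul_one, sub_zero]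
    apply mul_le_mul_of_nonneg_left _ (by positivity)
    apply Real.exp_le_exp.mpr
    have hx1 : x ≤ t + 1 := hx.2
    have hx0 : 0 < x := lt_of_le_of_lt ht hx.1
    nlinarith
  have h := setIntegral_ge_of_const_le (μ := volume) (c := gaussianPDFReal 0 1 (t+1))
    (s := Set.Ioc t (t+1)) measurableSet_Ioc (by simp)
    hpt ((integrable_gaussianPDFReal 0 1).integrableOn)
  calc (1/8) * Real.exp (-t^2) ≤ gaussianPDFReal 0 1 (t+1) := gauss_pdf_lb ht
    _ = gaussianPDFReal 0 1 (t+1) * (volume (Set.Ioc t (t+1))).toReal := by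
        simp [Real.volume_Ioc]
    _ ≤ ∫ x in Set.Ioc t (t+1), gaussianPDFReal 0 1 x := by
          simpa [measureReal_def, smul_eq_mul, mul_comm] using h

lemma gauss_union_le {t : ℝ} (ht : 0 ≤ t) :
    (gaussianReal 0 1 {x : ℝ | |x| ≤ t}).toReal
      ≤ 1 - (gaussianReal 0 1 (Set.Ioc t (t+1))).toReal := by
  set γ := gaussianReal 0 1
  have hA : MeasurableSet {x : ℝ | |x| ≤ t} := measurableSet_le (measurable_norm) measurable_const
  have hdisj : Disjoint {x : ℝ | |x| ≤ t} (Set.Ioc t (t+1)) := by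
    rw [Set.disjoint_left]
    rintro x (hx : |x| ≤ t) ⟨hx1, _⟩
    exact absurd hx1 (not_lt.mpr (le_trans (le_abs_self x) hx))
  have h1 : γ {x : ℝ | |x| ≤ t} + γ (Set.Ioc t (t+1)) ≤ 1 := by
    rw [← measure_union hdisj measurableSet_Ioc]
    exact prob_le_one
  have h2 := ENNReal.toReal_mono (by norm_num) h1
  rw [ENNReal.toReal_add (measure_ne_top γ _) (measure_ne_top γ _)] at h2
  simp only [ENNReal.toReal_one] at h2
  linarith

lemma map_gauss_integral {Ω : Type} [MeasurableSpace Ω] {μ : Measure Ω} {h : Ω → ℝ}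
    (hm : Measurable h) (hmap : μ.map h = gaussianReal 0 1) {F : ℝ → ℝ} (hF : Measurable F) :
    (Integrable (fun ω => F (h ω)) μ ↔ Integrable F (gaussianReal 0 1))
      ∧ ∫ ω, F (h ω) ∂μ = ∫ x, F x ∂(gaussianReal 0 1) := by
  constructor
  · rw [← hmap]
    exact (integrable_map_measure hF.aestronglyMeasurable hm.aemeasurable).symm
  · rw [← hmap, integral_map hm.aemeasurable hF.aestronglyMeasurable]

lemma abs_le_exp_add (x : ℝ) : |x| ≤ Real.exp x + Real.exp (-x) := by
  rcases abs_cases x with ⟨h, _⟩ | ⟨h, _⟩ <;> rw [h] <;>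
    [linarith [Real.add_one_le_exp x, Real.exp_pos (-x)];
     linarith [Real.add_one_le_exp (-x), Real.exp_pos x]]

lemma abs_integrable_gauss : Integrable (fun x : ℝ => |x|) (gaussianReal 0 1) := by
  apply Integrable.mono' ((integrable_exp_gaussian 1).add (integrable_exp_gaussian (-1)))
    measurable_abs.aestronglyMeasurable
  apply ae_of_all
  intro x
  simp only [Pi.add_apply, Real.norm_eq_abs, abs_abs, one_mul, neg_one_mul]
  exact abs_le_exp_add x

lemma max_le_exp_pair {b t x : ℝ} (hb : 0 < b) (ht : 0 < t) :
    max (b * |x| - t) 0 ≤ (b^2/t) *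
      (Real.exp ((t/b) * x - t^2/b^2) + Real.exp (-((t/b) * x) - t^2/b^2)) := by
  have hrhs : (0:ℝ) ≤ (b^2/t) *
      (Real.exp ((t/b) * x - t^2/b^2) + Real.exp (-((t/b) * x) - t^2/b^2)) := by positivity
  apply max_le _ hrhs
  have key : b * |x| - t ≤ (b^2/t) * Real.exp ((t/b) * |x| - t^2/b^2) := by
    have h1 : (t/b^2) * (b * |x| - t) ≤ Real.exp ((t/b^2) * (b * |x| - t)) := by
      linarith [Real.add_one_le_exp ((t/b^2) * (b * |x| - t)),
        Real.exp_pos ((t/b^2) * (b * |x| - t))]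
    have h2 : (t/b^2) * (b * |x| - t) = (t/b) * |x| - t^2/b^2 := by field_simp
    rw [h2] at h1
    calc b * |x| - t = (b^2/t) * ((t/b^2) * (b * |x| - t)) := by field_simp
      _ ≤ (b^2/t) * Real.exp ((t/b) * |x| - t^2/b^2) := by
          rw [h2]
          exact mul_le_mul_of_nonneg_left h1 (by positivity)
  apply le_trans key
  apply mul_le_mul_of_nonneg_left _ (by positivity)
  rcases abs_cases x with ⟨h, _⟩ | ⟨h, _⟩ <;> rw [h]
  · exact le_add_of_nonneg_right (Real.exp_pos _).le
  · rw [show (t/b) * (-x) - t^2/b^2 = -((t/b) * x) - t^2/b^2 by ring]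
    exact le_add_of_nonneg_left (Real.exp_pos _).le

lemma gauss_plus_integrable {b t : ℝ} (hb : 0 ≤ b) :
    Integrable (fun x => max (b * |x| - t) 0) (gaussianReal 0 1) := by
  apply Integrable.mono' ((abs_integrable_gauss.const_mul b).add (integrable_const |t|))
  · apply Measurable.aestronglyMeasurable
    exact ((measurable_abs.const_mul b).sub measurable_const).max measurable_const
  · apply ae_of_all
    intro x
    simp only [Pi.add_apply]
    rw [Real.norm_eq_abs, abs_of_nonneg (le_max_right _ _)]
    apply max_le
    · have : b * |x| - t ≤ b * |x| + |t| := by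
        have := neg_abs_le t; linarith
      simpa using this
    · positivity

lemma gauss_plus_bound {b t : ℝ} (hb : 0 < b) (ht : 0 < t) :
    ∫ x, max (b * |x| - t) 0 ∂(gaussianReal 0 1)
      ≤ 2 * (b^2/t) * Real.exp (-(t^2/(2*b^2))) := by
  have e : (fun x : ℝ => Real.exp ((t/b) * x - t^2/b^2) + Real.exp (-((t/b) * x) - t^2/b^2))
      = fun x => Real.exp (-(t^2/b^2)) * Real.exp ((t/b) * x)
        + Real.exp (-(t^2/b^2)) * Real.exp ((-(t/b)) * x) := by
    funext x
    rw [← Real.exp_add, ← Real.exp_add]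
    ring_nf
  have hint1 : Integrable (fun x => (b^2/t) *
      (Real.exp ((t/b) * x - t^2/b^2) + Real.exp (-((t/b) * x) - t^2/b^2)))
      (gaussianReal 0 1) := by
    apply Integrable.const_mul
    rw [e]
    exact ((integrable_exp_gaussian (t/b)).const_mul _).add
      ((integrable_exp_gaussian (-(t/b))).const_mul _)
  calc ∫ x, max (b * |x| - t) 0 ∂(gaussianReal 0 1)
      ≤ ∫ x, (b^2/t) * (Real.exp ((t/b) * x - t^2/b^2)
          + Real.exp (-((t/b) * x) - t^2/b^2)) ∂(gaussianReal 0 1) :=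
        integral_mono (gauss_plus_integrable hb.le) hint1
          (fun x => max_le_exp_pair hb ht)
    _ = 2 * (b^2/t) * Real.exp (-(t^2/(2*b^2))) := by
        rw [integral_const_mul]
        rw [e, integral_add ((integrable_exp_gaussian (t/b)).const_mul _)
          ((integrable_exp_gaussian (-(t/b))).const_mul _),
          integral_const_mul, integral_const_mul, integral_exp_gaussian, integral_exp_gaussian,
          ← Real.exp_add, ← Real.exp_add]
        have hb' : b ≠ 0 := hb.ne'
        have : -(t^2/b^2) + (t/b)^2/2 = -(t^2/(2*b^2)) := by field_simp; ring
        have h2 : -(t^2/b^2) + (-(t/b))^2/2 = -(t^2/(2*b^2)) := by field_simp; ring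
        rw [this, h2]
        ring


lemma sum_inv_sq_le (n : ℕ) :
    ∑ j ∈ Finset.range n, (1:ℝ)/(((j:ℝ)+1+3)^2) ≤ 1/3 := by
  have key : ∀ m : ℕ, ∑ j ∈ Finset.range m, (1:ℝ)/(((j:ℝ)+1+3)^2) ≤ 1/3 - 1/((m:ℝ)+3) := by
    intro m
    induction m with
    | zero => norm_num
    | succ m ih =>
      rw [Finset.sum_range_succ]
      have hm : (0:ℝ) < (m:ℝ)+3 := by positivity
      have hm4 : (0:ℝ) < (m:ℝ)+4 := by positivity
      have hstep : (1:ℝ)/(((m:ℝ)+1+3)^2) ≤ 1/((m:ℝ)+3) - 1/((m:ℝ)+4) := by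
        rw [div_sub_div _ _ (ne_of_gt hm) (ne_of_gt hm4), div_le_div_iff₀ (by positivity) (by positivity)]
        nlinarith [Nat.cast_nonneg (α := ℝ) m]
      have hcast : ((m+1:ℕ):ℝ) = (m:ℝ)+1 := by push_cast; ring
      rw [hcast]
      have h44 : (m:ℝ)+1+3 = (m:ℝ)+4 := by ring
      rw [h44] at hstep ⊢
      linarith
  calc ∑ j ∈ Finset.range n, (1:ℝ)/(((j:ℝ)+1+3)^2) ≤ 1/3 - 1/((n:ℝ)+3) := key n
    _ ≤ 1/3 := by
        have : (0:ℝ) < (n:ℝ)+3 := by positivity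
        have := one_div_pos.mpr this
        linarith

set_option maxHeartbeats 1000000 in
theorem diagonal_case :
    ∃ c C : ℝ, 0 < c ∧ 0 < C ∧
      ∀ (n : ℕ), 0 < n →
      ∀ (pstar q : ℝ≥0∞), 1 ≤ pstar → pstar ≤ 2 → 2 ≤ q →
      ∀ (a : Fin n → ℝ)
        (Ω : Type) (_ : MeasurableSpace Ω) (μ : Measure Ω) (_ : IsProbabilityMeasure μ)
        (g : Fin n × Fin n → Ω → ℝ),
        (∀ ij, Measurable (g ij)) →
        (∀ ij, μ.map (g ij) = gaussianReal 0 1) →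
        iIndepFun g μ →
        -- `astar` is the decreasing rearrangement of `(|a i|)`
        ∀ (astar : Fin n → ℝ) (σ : Equiv.Perm (Fin n)),
          Antitone astar → (∀ i, astar i = |a (σ i)|) →
          (∫ ω, opNormE pstar q
              (fun i j => (if i = j then a i else 0) * g (i, j) ω) ∂μ)
            = (∫ ω, ⨆ i, |a i * g (i, i) ω| ∂μ) ∧
          c * (⨆ i : Fin n, Real.sqrt (Real.log ((i : ℕ) + 1 + 3)) * astar i)
            ≤ (∫ ω, opNormE pstar q
                (fun i j => (if i = j then a i else 0) * g (i, j) ω) ∂μ) ∧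
          (∫ ω, opNormE pstar q
              (fun i j => (if i = j then a i else 0) * g (i, j) ω) ∂μ)
            ≤ C * ⨆ i : Fin n, Real.sqrt (Real.log ((i : ℕ) + 1 + 3)) * astar i := by
  refine ⟨1/40, 3, by norm_num, by norm_num, ?_⟩
  intro n hn pstar q hp1 hp2 hq2 a Ω mΩ μ hμ g hg hmap hind astar σ hanti hastar
  haveI : Nonempty (Fin n) := Fin.pos_iff_nonempty.mp hn
  set X : Ω → ℝ := fun ω => ⨆ i, |a i * g (i, i) ω| with hXdef
  have hON : ∀ ω, opNormE pstar q
      (fun i j => (if i = j then a i else 0) * g (i, j) ω) = X ω := by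
    intro ω
    have h1 : (fun i j => (if i = j then a i else 0) * g (i, j) ω)
        = Matrix.of (fun i j => if i = j then a i * g (i, i) ω else 0) := by
      funext i j
      by_cases h : i = j
      · subst h; simp
      · simp [Matrix.of_apply, h]
    rw [h1, opNormE_diag hn hp1 hp2 hq2]
  have heq : (∫ ω, opNormE pstar q
      (fun i j => (if i = j then a i else 0) * g (i, j) ω) ∂μ) = ∫ ω, X ω ∂μ :=
    integral_congr_ae (ae_of_all μ hON)
  have hastar_nonneg : ∀ i, 0 ≤ astar i := fun i => (hastar i) ▸ abs_nonneg _
  have hXnonneg : ∀ ω, 0 ≤ X ω := fun ω => Real.iSup_nonneg fun i => abs_nonneg _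
  have hXmeas : Measurable X := Measurable.iSup fun i => ((hg (i,i)).const_mul (a i)).abs
  have habsint : ∀ p : Fin n × Fin n, Integrable (fun ω => |g p ω|) μ := fun p =>
    ((map_gauss_integral (hg p) (hmap p) measurable_abs).1).mpr abs_integrable_gauss
  have hXint : Integrable X μ := by
    apply Integrable.mono' (integrable_finset_sum Finset.univ
      (fun (i : Fin n) _ => ((habsint (i,i)).const_mul |a i|)))
      hXmeas.aestronglyMeasurable
    apply ae_of_all
    intro ω
    rw [Real.norm_eq_abs, abs_of_nonneg (hXnonneg ω)]
    apply ciSup_le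
    intro i
    rw [abs_mul]
    exact Finset.single_le_sum (f := fun i : Fin n => |a i| * |g (i,i) ω|)
      (fun i _ => mul_nonneg (abs_nonneg _) (abs_nonneg _)) (Finset.mem_univ i)
  set M : ℝ := ⨆ i : Fin n, Real.sqrt (Real.log ((i : ℕ) + 1 + 3)) * astar i with hMdef
  have hL : ∀ i : Fin n, 1 ≤ Real.log (((i:ℕ):ℝ) + 1 + 3) := by
    intro i
    rw [Real.le_log_iff_exp_le (by positivity)]
    have h0 : (0:ℝ) ≤ ((i:ℕ):ℝ) := Nat.cast_nonneg _
    calc Real.exp 1 ≤ 2.7182818286 := Real.exp_one_lt_d9.le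
      _ ≤ ((i:ℕ):ℝ) + 1 + 3 := by linarith
  have hM0 : 0 ≤ M :=
    Real.iSup_nonneg fun i => mul_nonneg (Real.sqrt_nonneg _) (hastar_nonneg i)
  have hMmem : ∀ i : Fin n, Real.sqrt (Real.log (((i : ℕ):ℝ) + 1 + 3)) * astar i ≤ M :=
    fun i => le_ciSup (Set.Finite.bddAbove (Set.finite_range
      (fun i : Fin n => Real.sqrt (Real.log (((i : ℕ):ℝ) + 1 + 3)) * astar i))) i
  refine ⟨heq, ?_, ?_⟩
  · -- LOWER BOUND
    rw [heq]
    have hper : ∀ k : Fin n,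
        Real.sqrt (Real.log (((k : ℕ):ℝ) + 1 + 3)) * astar k ≤ 40 * ∫ ω, X ω ∂μ := by
      intro k
      set L := Real.log (((k:ℕ):ℝ) + 1 + 3) with hLdef
      have hL1 : 1 ≤ L := hL k
      set t := Real.sqrt (L/2) with htdef
      have ht0 : 0 < t := Real.sqrt_pos.mpr (by linarith)
      set s : Set ℝ := {x : ℝ | |x| ≤ t} with hsdef
      have hsm : MeasurableSet s := measurableSet_le measurable_abs measurable_const
      have hinj : Function.Injective (fun j : Fin n => ((σ j, σ j) : Fin n × Fin n)) := by
        intro x y hxy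
        exact σ.injective (congrArg Prod.fst hxy)
      set S : Finset (Fin n × Fin n) :=
        (Finset.Iic k).image (fun j : Fin n => ((σ j, σ j) : Fin n × Fin n)) with hSdef
      have hScard : S.card = (k:ℕ) + 1 := by
        rw [hSdef, Finset.card_image_of_injective _ hinj, Fin.card_Iic]
      have hprod := hind.measure_inter_preimage_eq_mul S
        (sets := fun _ : Fin n × Fin n => s) (fun p _ => hsm)
      set T := ⋂ p ∈ S, g p ⁻¹' s with hTdef
      have hTmeas : MeasurableSet T :=
        MeasurableSet.biInter (Finset.countable_toSet S) (fun p _ => (hg p) hsm)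
      have hfac : ∀ p : Fin n × Fin n, μ (g p ⁻¹' s) = (gaussianReal 0 1) s := by
        intro p
        rw [← hmap p, Measure.map_apply (hg p) hsm]
      have hmuT : μ T = ((gaussianReal 0 1) s) ^ ((k:ℕ)+1) := by
        rw [hTdef, hprod, Finset.prod_congr rfl (fun p _ => hfac p), Finset.prod_const, hScard]
      set F : ℝ := ((gaussianReal 0 1) s).toReal with hFdef
      have hF0 : 0 ≤ F := ENNReal.toReal_nonneg
      set ρ : ℝ := ((gaussianReal 0 1) (Set.Ioc t (t+1))).toReal with hρdef
      have hFρ : F ≤ 1 - ρ := gauss_union_le ht0.le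
      have hρlb : (1/8) * Real.exp (-t^2) ≤ ρ := gauss_tail ht0.le
      have ht2 : t^2 = L/2 := Real.sq_sqrt (by linarith)
      have hupos : (0:ℝ) < ((k:ℕ):ℝ)+1+3 := by positivity
      have hexp1 : Real.exp (L/2) ^ 2 = ((k:ℕ):ℝ)+1+3 := by
        rw [← Real.exp_nat_mul]
        push_cast
        rw [show (2:ℝ) * (L/2) = L by ring, Real.exp_log hupos]
      have hsqrt_eq : Real.sqrt (((k:ℕ):ℝ)+1+3) = Real.exp (L/2) := by
        rw [← hexp1, Real.sqrt_sq (Real.exp_pos _).le]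
      have hexpt : Real.exp (-t^2) = (Real.sqrt (((k:ℕ):ℝ)+1+3))⁻¹ := by
        rw [ht2, hsqrt_eq, ← Real.exp_neg]
      have hsqrt_le : Real.sqrt (((k:ℕ):ℝ)+1+3) ≤ 2*(((k:ℕ):ℝ)+1) := by
        have h1 : (((k:ℕ):ℝ)+1+3) ≤ (2*(((k:ℕ):ℝ)+1))^2 := by
          nlinarith [Nat.cast_nonneg (α := ℝ) (k:ℕ)]
        calc Real.sqrt (((k:ℕ):ℝ)+1+3) ≤ Real.sqrt ((2*(((k:ℕ):ℝ)+1))^2) :=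
              Real.sqrt_le_sqrt h1
          _ = 2*(((k:ℕ):ℝ)+1) := Real.sqrt_sq (by positivity)
      have hsqrtpos : (0:ℝ) < Real.sqrt (((k:ℕ):ℝ)+1+3) := Real.sqrt_pos.mpr hupos
      have hkρ : 1/16 ≤ (((k:ℕ):ℝ)+1) * ρ := by
        have hinv2 : (2*(((k:ℕ):ℝ)+1))⁻¹ ≤ (Real.sqrt (((k:ℕ):ℝ)+1+3))⁻¹ := by
          rw [← one_div, ← one_div]
          exact one_div_le_one_div_of_le hsqrtpos hsqrt_le
        have h8 : (1/8) * (Real.sqrt (((k:ℕ):ℝ)+1+3))⁻¹ ≤ ρ := by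
          rw [← hexpt]; exact hρlb
        have hkpos : (0:ℝ) < ((k:ℕ):ℝ)+1 := by positivity
        have h9 : (((k:ℕ):ℝ)+1) * ((1/8) * (2*(((k:ℕ):ℝ)+1))⁻¹) = 1/16 := by
          field_simp
          ring
        calc (1:ℝ)/16 = (((k:ℕ):ℝ)+1) * ((1/8) * (2*(((k:ℕ):ℝ)+1))⁻¹) := h9.symm
          _ ≤ (((k:ℕ):ℝ)+1) * ((1/8) * (Real.sqrt (((k:ℕ):ℝ)+1+3))⁻¹) := by
              apply mul_le_mul_of_nonneg_left _ hkpos.le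
              apply mul_le_mul_of_nonneg_left hinv2 (by norm_num)
          _ ≤ (((k:ℕ):ℝ)+1) * ρ := mul_le_mul_of_nonneg_left h8 hkpos.le
      have hρ0 : 0 ≤ ρ := ENNReal.toReal_nonneg
      have hFm : F ^ ((k:ℕ)+1) ≤ Real.exp (-(1/16)) := by
        calc F ^ ((k:ℕ)+1) ≤ (1-ρ) ^ ((k:ℕ)+1) := pow_le_pow_left₀ hF0 hFρ _
          _ ≤ (Real.exp (-ρ)) ^ ((k:ℕ)+1) :=
              pow_le_pow_left₀ (by linarith) (Real.one_sub_le_exp_neg ρ) _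
          _ = Real.exp ((((k:ℕ):ℝ)+1) * (-ρ)) := by
              rw [← Real.exp_nat_mul]
              push_cast
              ring_nf
          _ ≤ Real.exp (-(1/16)) := by
              apply Real.exp_le_exp.mpr
              nlinarith
      have hcompl : (μ T).toReal + (μ Tᶜ).toReal = 1 := by
        rw [← ENNReal.toReal_add (measure_ne_top μ T) (measure_ne_top μ Tᶜ),
          measure_add_measure_compl hTmeas, measure_univ, ENNReal.toReal_one]
      have hTr : (μ T).toReal = F ^ ((k:ℕ)+1) := by
        rw [hmuT, ENNReal.toReal_pow]
      have he16 : Real.exp (-(1/16)) ≤ 19/20 := by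
        rw [Real.exp_neg]
        have h1 : (1:ℝ) + 1/16 ≤ Real.exp (1/16) := by
          have := Real.add_one_le_exp (1/16 : ℝ); linarith
        have h2 : (Real.exp (1/16))⁻¹ ≤ ((1:ℝ) + 1/16)⁻¹ := by
          rw [← one_div, ← one_div]
          exact one_div_le_one_div_of_le (by norm_num) h1
        calc (Real.exp (1/16))⁻¹ ≤ ((1:ℝ) + 1/16)⁻¹ := h2
          _ ≤ 19/20 := by norm_num
      have hTc : 1/20 ≤ (μ Tᶜ).toReal := by
        rw [hTr] at hcompl
        linarith [hFm, he16]
      have hsub : Tᶜ ⊆ {ω | astar k * t ≤ X ω} := by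
        intro ω hω
        have hω2 : ω ∉ T := hω
        rw [hTdef, Set.mem_iInter₂] at hω2
        push_neg at hω2
        obtain ⟨p, hpS, hps⟩ := hω2
        rw [hSdef, Finset.mem_image] at hpS
        obtain ⟨j, hj, rfl⟩ := hpS
        have hjk : j ≤ k := Finset.mem_Iic.mp hj
        have hgt : t < |g (σ j, σ j) ω| := by
          by_contra hcon
          exact hps (by simpa [hsdef] using not_lt.mp hcon)
        show astar k * t ≤ X ω
        calc astar k * t ≤ astar j * |g (σ j, σ j) ω| :=
              mul_le_mul (hanti hjk) hgt.le ht0.le (hastar_nonneg j)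
          _ = |a (σ j) * g (σ j, σ j) ω| := by rw [hastar j, ← abs_mul]
          _ ≤ X ω := le_ciSup (Set.Finite.bddAbove (Set.finite_range
              (fun i : Fin n => |a i * g (i, i) ω|))) (σ j)
      have hmarkov := mul_meas_ge_le_integral_of_nonneg (ae_of_all μ hXnonneg) hXint
        (astar k * t)
      have hmono : (μ Tᶜ).toReal ≤ (μ {ω | astar k * t ≤ X ω}).toReal :=
        ENNReal.toReal_mono (measure_ne_top μ _) (measure_mono hsub)
      have hkey : astar k * t * (1/20) ≤ ∫ ω, X ω ∂μ := by
        calc astar k * t * (1/20) ≤ astar k * t * (μ {ω | astar k * t ≤ X ω}).toReal := by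
              apply mul_le_mul_of_nonneg_left _ (mul_nonneg (hastar_nonneg k) ht0.le)
              linarith
          _ ≤ ∫ ω, X ω ∂μ := hmarkov
      -- conclude
      have hsL : Real.sqrt L ≤ 1.5 * t := by
        have h1 : Real.sqrt L = Real.sqrt 2 * t := by
          rw [htdef, ← Real.sqrt_mul (by norm_num : (0:ℝ) ≤ 2)]
          congr 1
          ring
        have h2 : Real.sqrt 2 ≤ 1.5 := by
          rw [show (1.5:ℝ) = Real.sqrt (1.5^2) from (Real.sqrt_sq (by norm_num)).symm]
          apply Real.sqrt_le_sqrt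
          norm_num
        calc Real.sqrt L = Real.sqrt 2 * t := h1
          _ ≤ 1.5 * t := mul_le_mul_of_nonneg_right h2 ht0.le
      have e3 : Real.sqrt L * astar k ≤ 1.5 * t * astar k :=
        mul_le_mul_of_nonneg_right hsL (hastar_nonneg k)
      have e5 : 1.5 * t * astar k = 1.5 * (astar k * t) := by ring
      have e6 : 0 ≤ astar k * t := mul_nonneg (hastar_nonneg k) ht0.le
      linarith [hkey, e3, e5, e6]
    have hsup := ciSup_le hper
    rw [← hMdef] at hsup
    linarith
  · -- UPPER BOUND
    rw [heq]
    rcases eq_or_lt_of_le hM0 with hM0' | hMpos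
    · -- M = 0 : all a i are zero
      have hai : ∀ i, a i = 0 := by
        intro i
        have h1 := hMmem (σ.symm i)
        rw [← hM0'] at h1
        have hpos : 0 < Real.sqrt (Real.log ((((σ.symm i):ℕ):ℝ) + 1 + 3)) :=
          Real.sqrt_pos.mpr (by linarith [hL (σ.symm i)])
        have h2 : astar (σ.symm i) = 0 := by
          nlinarith [hastar_nonneg (σ.symm i)]
        have h3 := hastar (σ.symm i)
        rw [Equiv.apply_symm_apply, h2] at h3
        exact abs_eq_zero.mp h3.symm
      have hXzero : X = fun _ => (0:ℝ) := by
        funext ω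
        rw [hXdef]
        simp only [hai, zero_mul, abs_zero]
        exact ciSup_const
      rw [hXzero]
      rw [integral_zero]
      nlinarith
    · -- M > 0
      have hFmeas : ∀ j : Fin n, Measurable (fun x : ℝ => max (astar j * |x| - 2*M) 0) :=
        fun j => ((measurable_abs.const_mul _).sub measurable_const).max measurable_const
      have hterm_int : ∀ j : Fin n,
          Integrable (fun ω => max (astar j * |g (σ j, σ j) ω| - 2*M) 0) μ := fun j =>
        ((map_gauss_integral (hg (σ j, σ j)) (hmap _) (hFmeas j)).1).mpr
          (gauss_plus_integrable (hastar_nonneg j))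
      have hBint : Integrable (fun ω => 2*M
          + ∑ j : Fin n, max (astar j * |g (σ j, σ j) ω| - 2*M) 0) μ :=
        (integrable_const _).add (integrable_finset_sum _ (fun j _ => hterm_int j))
      have hpt : ∀ ω, X ω ≤ 2*M
          + ∑ j : Fin n, max (astar j * |g (σ j, σ j) ω| - 2*M) 0 := by
        intro ω
        apply ciSup_le
        intro i
        have e1 : |a i * g (i, i) ω|
            = astar (σ.symm i) * |g (σ (σ.symm i), σ (σ.symm i)) ω| := by
          rw [abs_mul, hastar (σ.symm i), Equiv.apply_symm_apply]
        rw [e1]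
        have h2 : astar (σ.symm i) * |g (σ (σ.symm i), σ (σ.symm i)) ω|
            ≤ 2*M + max (astar (σ.symm i) * |g (σ (σ.symm i), σ (σ.symm i)) ω| - 2*M) 0 := by
          have := le_max_left (astar (σ.symm i) * |g (σ (σ.symm i), σ (σ.symm i)) ω| - 2*M)
            (0:ℝ)
          linarith
        apply le_trans h2
        apply add_le_add_right
        exact Finset.single_le_sum
          (f := fun j : Fin n => max (astar j * |g (σ j, σ j) ω| - 2*M) 0)
          (fun j _ => le_max_right _ _) (Finset.mem_univ (σ.symm i))
      have hmono := integral_mono hXint hBint hpt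
      have hsplit : (∫ ω, (2*M
          + ∑ j : Fin n, max (astar j * |g (σ j, σ j) ω| - 2*M) 0) ∂μ)
          = 2*M + ∑ j : Fin n, ∫ ω, max (astar j * |g (σ j, σ j) ω| - 2*M) 0 ∂μ := by
        rw [integral_add (integrable_const _) (integrable_finset_sum _ (fun j _ => hterm_int j)),
          integral_const, integral_finset_sum _ (fun j _ => hterm_int j)]
        simp [measure_univ]
      have hterm_bd : ∀ j : Fin n,
          (∫ ω, max (astar j * |g (σ j, σ j) ω| - 2*M) 0 ∂μ)
            ≤ M * (1/((((j:ℕ):ℝ)+1+3)^2)) := by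
        intro j
        have htrans := (map_gauss_integral (hg (σ j, σ j)) (hmap _) (hFmeas j)).2
        rw [htrans]
        set L := Real.log (((j:ℕ):ℝ) + 1 + 3) with hLdef
        have hL1 : 1 ≤ L := hL j
        have hupos : (0:ℝ) < ((j:ℕ):ℝ)+1+3 := by positivity
        rcases eq_or_lt_of_le (hastar_nonneg j) with hb0 | hbpos
        · -- astar j = 0
          have hzero : (fun x : ℝ => max (astar j * |x| - 2*M) 0) = fun _ => (0:ℝ) := by
            funext x
            rw [← hb0, zero_mul, zero_sub]
            exact max_eq_right (by linarith)
          rw [hzero, integral_zero]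
          positivity
        · -- astar j > 0
          apply le_trans (gauss_plus_bound hbpos (by linarith))
          -- arithmetic
          have hbM : Real.sqrt L * astar j ≤ M := hMmem j
          have hL0 : (0:ℝ) ≤ L := by linarith
          have h1 : (Real.sqrt L * astar j)^2 ≤ M^2 :=
            pow_le_pow_left₀ (mul_nonneg (Real.sqrt_nonneg _) (hastar_nonneg j)) hbM 2
          rw [mul_pow, Real.sq_sqrt hL0] at h1
          have hb2 : astar j ^ 2 ≤ M^2 := by nlinarith
          have hA : 2 * ((astar j)^2/(2*M)) ≤ M := by
            rw [show 2 * ((astar j)^2/(2*M)) = (astar j)^2 / M by ring]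
            rw [div_le_iff₀ hMpos]
            nlinarith
          have hB : Real.exp (-((2*M)^2/(2*(astar j)^2))) ≤ (((((j:ℕ):ℝ)+1+3))^2)⁻¹ := by
            have hexp2L : Real.exp (-(2*L)) = (((((j:ℕ):ℝ)+1+3))^2)⁻¹ := by
              rw [Real.exp_neg, show (2:ℝ)*L = L+L by ring, Real.exp_add,
                Real.exp_log hupos, ← sq]
            rw [← hexp2L]
            apply Real.exp_le_exp.mpr
            rw [neg_le_neg_iff]
            rw [le_div_iff₀ (by positivity)]
            nlinarith
          calc 2 * ((astar j)^2/(2*M)) * Real.exp (-((2*M)^2/(2*(astar j)^2)))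
              ≤ M * (((((j:ℕ):ℝ)+1+3))^2)⁻¹ :=
                mul_le_mul hA hB (Real.exp_pos _).le hM0
            _ = M * (1/((((j:ℕ):ℝ)+1+3)^2)) := by rw [one_div]
      have hsum : ∑ j : Fin n, M * (1/((((j:ℕ):ℝ)+1+3)^2)) ≤ M * (1/3) := by
        rw [← Finset.mul_sum]
        apply mul_le_mul_of_nonneg_left _ hM0
        rw [Fin.sum_univ_eq_sum_range (fun j : ℕ => (1:ℝ)/(((j:ℝ)+1+3)^2))]
        exact sum_inv_sq_le n
      calc ∫ ω, X ω ∂μ ≤ 2*M + ∑ j : Fin n,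
            ∫ ω, max (astar j * |g (σ j, σ j) ω| - 2*M) 0 ∂μ := by rw [← hsplit]; exact hmono
        _ ≤ 2*M + ∑ j : Fin n, M * (1/((((j:ℕ):ℝ)+1+3)^2)) := by
            apply add_le_add_right
            exact Finset.sum_le_sum (fun j _ => hterm_bd j)
        _ ≤ 2*M + M * (1/3) := add_le_add_right hsum _
        _ ≤ 3 * M := by linarith
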